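/- There exist a constant c > 0 and an infinite family of graphs G such that χ(G) ≥ c·bp(G)^{6/5}, disproving the Alon–Saks–Seymour conjecture that χ(G) ≤ bp(G) + 1. -/

import Mathlib

set_option maxRecDepth 10000

/-- `crossAdj U W u v` : `u` and `v` are on opposite sides of the biclique `B(U,W)`. -/
def crossAdj {V : Type*} (U W : Set V) (u v : V) : Prop :=
  (u ∈ U ∧ v ∈ W) ∨ (u ∈ W ∧ v ∈ U)

/-- `B` is a partition of the edge set of `G` into `k` complete bipartite graphs:
every cross pair of each biclique is an edge of `G`, and every edge of `G` lies in
exactly one of the bicliques. -/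
def IsBicliquePartition {V : Type*} (G : SimpleGraph V) {k : ℕ}
    (B : Fin k → Set V × Set V) : Prop :=
  (∀ i, Disjoint (B i).1 (B i).2) ∧
  (∀ i, ∀ u v, crossAdj (B i).1 (B i).2 u v → G.Adj u v) ∧
  (∀ u v, G.Adj u v → ∃! i, crossAdj (B i).1 (B i).2 u v)

/-- The biclique partition number `bp(G)`: the minimum number of complete bipartite
graphs needed to partition the edge set of `G`. -/
noncomputable def bp {V : Type*} (G : SimpleGraph V) : ℕ :=
  sInf {k | ∃ B : Fin k → Set V × Set V, IsBicliquePartition G B}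

namespace ASS

def cube : Fin 22 → Fin 7 → Option Bool :=
  ![![some true, none, none, none, some true, some true, some true],
    ![none, none, some true, none, some false, some false, some false],
    ![none, none, none, some false, some true, none, some false],
    ![none, some false, none, some true, some true, none, some false],
    ![none, some true, some false, some true, none, none, some false],
    ![some false, some true, some true, some true, some true, none, none],
    ![none, some true, some false, some false, some false, none, none],
    ![some false, some true, none, some false, some true, none, some true],
    ![some true, none, some false, none, some true, some false, some true],
    ![some true, none, some true, some false, none, some false, some true],
    ![none, some false, some true, some true, none, some false, some true],
    ![some false, some true, some true, none, some false, none, some true],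
    ![some true, none, some true, some false, some false, some true, none],
    ![some false, none, some true, none, some false, some true, some false],
    ![some true, some false, none, some true, some false, some true, none],
    ![none, some true, some false, some true, some false, none, some true],
    ![some false, none, some false, some true, some true, none, some true],
    ![some false, some false, none, some false, none, some false, some true],
    ![some false, some false, some true, none, none, some true, some true],
    ![some false, some false, some false, some true, some false, none, none],
    ![some true, some false, some false, none, some false, some false, none],
    ![none, some false, some false, some false, some false, some true, none]]

def slotT : Fin 22 → Fin 5 → Option (Fin 7) :=
  ![![some 0, some 4, some 5, some 6, none],
    ![some 2, some 4, some 5, some 6, none],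
    ![some 3, some 4, some 6, none, none],
    ![some 1, some 3, some 4, some 6, none],
    ![some 1, some 2, some 3, some 6, none],
    ![some 0, some 1, some 2, some 3, some 4],
    ![some 1, some 2, some 3, some 4, none],
    ![some 0, some 1, some 3, some 4, some 6],
    ![some 0, some 2, some 4, some 5, some 6],
    ![some 0, some 2, some 3, some 5, some 6],
    ![some 1, some 2, some 3, some 5, some 6],
    ![some 0, some 1, some 2, some 4, some 6],
    ![some 0, some 2, some 3, some 4, some 5],
    ![some 0, some 2, some 4, some 5, some 6],
    ![some 0, some 1, some 3, some 4, some 5],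
    ![some 1, some 2, some 3, some 4, some 6],
    ![some 0, some 2, some 3, some 4, some 6],
    ![some 0, some 1, some 3, some 5, some 6],
    ![some 0, some 1, some 2, some 5, some 6],
    ![some 0, some 1, some 2, some 3, some 4],
    ![some 0, some 1, some 2, some 4, some 5],
    ![some 1, some 2, some 3, some 4, some 5]]

def eslT : Fin 22 → Fin 4 → Option (Fin 7) :=
  ![![some 4, some 5, some 6, none],
    ![none, none, none, none],
    ![none, none, none, none],
    ![some 4, none, none, none],
    ![some 3, none, none, none],
    ![some 2, some 3, some 4, none],
    ![none, none, none, none],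
    ![some 4, some 6, none, none],
    ![some 4, some 6, none, none],
    ![some 2, some 6, none, none],
    ![some 3, some 6, none, none],
    ![some 2, some 6, none, none],
    ![some 2, some 5, none, none],
    ![some 5, none, none, none],
    ![some 3, some 5, none, none],
    ![some 3, some 6, none, none],
    ![some 4, some 6, none, none],
    ![none, none, none, none],
    ![some 5, some 6, none, none],
    ![none, none, none, none],
    ![none, none, none, none],
    ![none, none, none, none]]

def i0T : Fin 22 → Fin 7 :=
  ![0, 2, 4, 3, 1, 1, 1, 1, 0, 0, 2, 1, 0, 2, 0, 1, 3, 6, 2, 3, 0, 5]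

abbrev Pat := Fin 7 → Bool

def matchesC (ρ : Pat) (m : Fin 22) : Prop :=
  ∀ i : Fin 7, ∀ b : Bool, cube m i = some b → ρ i = b

instance : ∀ ρ m, Decidable (matchesC ρ m) := fun ρ m => by
  unfold matchesC; infer_instance

def covered (ρ : Pat) : Prop := ∃ m : Fin 22, matchesC ρ m

instance : DecidablePred covered := fun ρ => by unfold covered; infer_instance

-- Facts about the tables
lemma F1 : ∀ m, cube m (i0T m) = some true := by decide
lemma F2 : ∀ m s i, slotT m s = some i → cube m i ≠ none := by decide
lemma F3 : ∀ m i, cube m i ≠ none → ∃ s, slotT m s = some i := by decide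
lemma F5 : ∀ m s i, eslT m s = some i → cube m i = some true ∧ i ≠ i0T m := by decide
lemma F6 : ∀ m i, cube m i = some true → i ≠ i0T m → ∃ s, eslT m s = some i := by decide
lemma F7 : ∀ m s s' i, eslT m s = some i → eslT m s' = some i → s = s' := by decide
lemma F9 : ∀ ρ : Pat, ∀ m m', matchesC ρ m → matchesC ρ m' → m = m' := by decide
lemma F10 : ∀ ρ : Pat, ρ ≠ (fun _ => false) → ¬ covered ρ →
    ((∀ i : Fin 7, i.val < 4 → ρ i = true) ∧ (∃ i : Fin 7, 4 ≤ i.val ∧ ρ i = false)) ∨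
    ((∀ i : Fin 7, i.val < 4 → ρ i = false) ∧ (∀ i : Fin 7, 4 ≤ i.val → ρ i = true)) := by
  decide


abbrev V (n : ℕ) := Fin 7 → Fin (n + 1)

def pat {n : ℕ} (x y : V n) : Pat := fun i => decide (x i ≠ y i)

lemma pat_comm {n : ℕ} (x y : V n) : pat x y = pat y x := by
  funext i; exact decide_eq_decide.mpr ne_comm

lemma pat_true_iff {n : ℕ} {x y : V n} {i : Fin 7} : pat x y i = true ↔ x i ≠ y i := by
  simp [pat]

lemma pat_false_iff {n : ℕ} {x y : V n} {i : Fin 7} : pat x y i = false ↔ x i = y i := by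
  simp [pat]

def G (n : ℕ) : SimpleGraph (V n) where
  Adj x y := x ≠ y ∧ covered (pat x y)
  symm := by
    refine ⟨?_⟩
    rintro x y ⟨hxy, hc⟩
    exact ⟨hxy.symm, pat_comm y x ▸ hc⟩
  loopless := by refine ⟨?_⟩; rintro x ⟨h, -⟩; exact h rfl

noncomputable def εAt (m : Fin 22) (e : Fin 4 → Bool) (i : Fin 7) : Bool :=
  decide (∃ s, eslT m s = some i ∧ e s = true)

def inSide {n : ℕ} (m : Fin 22) (t : Fin 5 → Fin (n+1)) (e : Fin 4 → Bool)
    (w : Bool) (x : V n) : Prop :=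
  ∀ s : Fin 5, ∀ i : Fin 7, slotT m s = some i →
    (match cube m i with
     | some false => x i = t s
     | some true => if ((εAt m e i).xor w) = true then t s < x i else x i = t s
     | none => True)

def canonical (m : Fin 22) {n : ℕ} (t : Fin 5 → Fin (n+1)) (e : Fin 4 → Bool) : Prop :=
  (∀ s, slotT m s = none → t s = 0) ∧ (∀ s, eslT m s = none → e s = false)

abbrev T (n : ℕ) := Fin 22 × (Fin 5 → Fin (n+1)) × (Fin 4 → Bool)

open Classical in
noncomputable def Bfam (n : ℕ) : T n → Set (V n) × Set (V n) := fun idx =>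
  if canonical idx.1 idx.2.1 idx.2.2 then
    ({x | inSide idx.1 idx.2.1 idx.2.2 false x}, {x | inSide idx.1 idx.2.1 idx.2.2 true x})
  else (∅, ∅)

lemma eps_i0 (m : Fin 22) (e : Fin 4 → Bool) : εAt m e (i0T m) = false := by
  simp only [εAt, decide_eq_false_iff_not]
  rintro ⟨s, hs, -⟩
  exact (F5 m s _ hs).2 rfl

lemma eps_eq (m : Fin 22) (e : Fin 4 → Bool) {s : Fin 4} {i : Fin 7}
    (hs : eslT m s = some i) : εAt m e i = e s := by
  rcases he : e s with _ | _
  · simp only [εAt, decide_eq_false_iff_not]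
    rintro ⟨s', hs', hes'⟩
    rw [F7 m s' s i hs' hs] at hes'
    rw [he] at hes'; exact Bool.false_ne_true hes'
  · simp only [εAt, decide_eq_true_eq]
    exact ⟨s, hs, he⟩

section Fixed
variable {n : ℕ} {m : Fin 22} {t : Fin 5 → Fin (n+1)} {e : Fin 4 → Bool}

lemma sides_disjoint : Disjoint {x : V n | inSide m t e false x} {x | inSide m t e true x} := by
  rw [Set.disjoint_left]
  intro x hU hW
  obtain ⟨s0, hs0⟩ := F3 m (i0T m) (by rw [F1 m]; simp)
  have h1 := hU s0 _ hs0
  have h2 := hW s0 _ hs0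
  rw [F1 m] at h1 h2
  simp only [eps_i0, Bool.xor_false, Bool.xor_true, Bool.not_false, if_true] at h1 h2
  simp only [if_neg (by simp : ¬ (false = true))] at h1
  rw [h1] at h2
  exact lt_irrefl _ h2

lemma cross_matches {u v : V n} (hu : inSide m t e false u) (hv : inSide m t e true v) :
    matchesC (pat u v) m ∧ u ≠ v := by
  have key : ∀ i : Fin 7, ∀ b : Bool, cube m i = some b → pat u v i = b := by
    intro i b hc
    obtain ⟨s, hs⟩ := F3 m i (by rw [hc]; simp)
    have h1 := hu s i hs
    have h2 := hv s i hs
    rw [hc] at h1 h2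
    cases b with
    | false =>
      simp only at h1 h2
      rw [pat_false_iff, h1, h2]
    | true =>
      rcases hε : εAt m e i with _ | _ <;>
        simp only [hε, Bool.xor_false, Bool.xor_true, Bool.not_false, Bool.not_true,
          if_true, if_neg (by simp : ¬ (false = true))] at h1 h2
      · rw [pat_true_iff, h1]; exact ne_of_lt h2
      · rw [pat_true_iff]; rw [h2]; exact (ne_of_lt h1).symm
  refine ⟨key, ?_⟩
  intro hEq
  have := key (i0T m) true (F1 m)
  rw [pat_true_iff] at this
  exact this (by rw [hEq])

end Fixed

section Main
variable {n : ℕ}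

/-- canonical index attached to an adjacent, oriented pair -/
noncomputable def tOf (m : Fin 22) (u v : V n) : Fin 5 → Fin (n+1) := fun s =>
  match slotT m s with
  | some i => if cube m i = some true then min (u i) (v i) else u i
  | none => 0

noncomputable def eOf (m : Fin 22) (u v : V n) : Fin 4 → Bool := fun s =>
  match eslT m s with
  | some i => decide (v i < u i)
  | none => false

lemma canonical_of : canonical m (tOf m u v) (eOf m u v) := by
  constructor
  · intro s hs; simp [tOf, hs]
  · intro s hs; simp [eOf, hs]

lemma mem_sides (m : Fin 22) (u v : V n) (hm : matchesC (pat u v) m)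
    (hor : u (i0T m) < v (i0T m)) :
    inSide m (tOf m u v) (eOf m u v) false u ∧ inSide m (tOf m u v) (eOf m u v) true v := by
  have heps : ∀ i : Fin 7, cube m i = some true → εAt m (eOf m u v) i = decide (v i < u i) := by
    intro i hc
    by_cases hi : i = i0T m
    · subst hi
      rw [eps_i0]
      symm; simp only [decide_eq_false_iff_not, not_lt]
      exact le_of_lt hor
    · obtain ⟨s, hs⟩ := F6 m i hc hi
      rw [eps_eq m _ hs]
      simp [eOf, hs]
  constructor
  · intro s i hs
    rcases hcube : cube m i with _ | b
    · simp
    · cases b with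
      | false =>
        have heq : u i = v i := pat_false_iff.mp (hm i false hcube)
        simp [tOf, hs, hcube]
      | true =>
        have hne := pat_true_iff.mp (hm i true hcube)
        simp only [heps i hcube, Bool.xor_false]
        rcases lt_or_gt_of_ne hne with h | h
        · rw [if_neg]
          · simp [tOf, hs, hcube, min_eq_left (le_of_lt h)]
          · simp [not_lt.mpr (le_of_lt h)]
        · rw [if_pos (by simpa using h)]
          simp only [tOf, hs, hcube, if_pos rfl]
          rw [min_eq_right (le_of_lt h)]
          exact h
  · intro s i hs
    rcases hcube : cube m i with _ | b
    · simp
    · cases b with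
      | false =>
        have heq : u i = v i := pat_false_iff.mp (hm i false hcube)
        simp [tOf, hs, hcube, heq]
      | true =>
        have hne := pat_true_iff.mp (hm i true hcube)
        simp only [heps i hcube, Bool.xor_true]
        rcases lt_or_gt_of_ne hne with h | h
        · rw [if_pos (by simp [not_lt.mpr (le_of_lt h)] : (!decide (v i < u i)) = true)]
          simp only [tOf, hs, hcube, if_pos rfl]
          rw [min_eq_left (le_of_lt h)]
          exact h
        · rw [if_neg (by simp [h] : ¬ (!decide (v i < u i)) = true)]
          simp [tOf, hs, hcube, min_eq_right (le_of_lt h)]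

/-- the (unique) index covering an oriented adjacent pair -/
lemma exists_unique_oriented {u v : V n} (m : Fin 22) (hm : matchesC (pat u v) m)
    (hne : u ≠ v) (hor : u (i0T m) < v (i0T m)) :
    ∃! idx : T n, crossAdj ((Bfam n idx).1) ((Bfam n idx).2) u v := by
  classical
  obtain ⟨hu, hv⟩ := mem_sides m u v hm hor
  refine ⟨⟨m, tOf m u v, eOf m u v⟩, ?_, ?_⟩
  · simp only [Bfam, if_pos canonical_of]
    exact Or.inl ⟨hu, hv⟩
  · rintro ⟨m', t', e'⟩ hcross
    by_cases hcan : canonical m' t' e'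
    swap
    · simp only [Bfam, if_neg hcan] at hcross
      rcases hcross with ⟨h, -⟩ | ⟨h, -⟩ <;> exact absurd h (Set.notMem_empty _)
    simp only [Bfam, if_pos hcan] at hcross
    -- rule out the swapped orientation
    have hcase : inSide m' t' e' false u ∧ inSide m' t' e' true v := by
      rcases hcross with h | ⟨huW, hvU⟩
      · exact h
      · exfalso
        have hvU' : inSide m' t' e' false v := hvU
        have huW' : inSide m' t' e' true u := huW
        have hm2 : matchesC (pat v u) m' := (cross_matches hvU' huW').1
        rw [pat_comm] at hm2
        have hmm : m' = m := F9 _ m' m hm2 hm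
        subst hmm
        obtain ⟨s0, hs0⟩ := F3 m' (i0T m') (by rw [F1 m']; simp)
        have h1 := hvU' s0 _ hs0
        have h2 := huW' s0 _ hs0
        rw [F1 m'] at h1 h2
        simp only [eps_i0, Bool.xor_false, Bool.xor_true, Bool.not_false, if_true,
          if_neg (by simp : ¬ (false = true))] at h1 h2
        rw [← h1] at h2
        exact absurd hor (not_lt.mpr (le_of_lt h2))
    obtain ⟨hu', hv'⟩ := hcase
    have hm' : matchesC (pat u v) m' := (cross_matches hu' hv').1
    have hmm : m' = m := F9 _ m' m hm' hm
    subst hmm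
    have ht : t' = tOf m' u v := by
      funext s
      rcases hs : slotT m' s with _ | i
      · rw [hcan.1 s hs]; simp [tOf, hs]
      · have h1 := hu' s i hs
        have h2 := hv' s i hs
        rcases hcube : cube m' i with _ | b
        · exact absurd hcube (F2 m' s i hs)
        rw [hcube] at h1 h2
        cases b with
        | false =>
          simp only at h1
          simp [tOf, hs, hcube, h1.symm]
        | true =>
          rcases hε : εAt m' e' i with _ | _ <;> rw [hε] at h1 h2 <;>
            simp only [Bool.xor_false, Bool.xor_true, Bool.not_false, Bool.not_true,
              if_pos, if_neg (by simp : ¬ (false = true))] at h1 h2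
          · have huv : u i < v i := by rw [h1]; exact h2
            simp [tOf, hs, hcube, min_eq_left (le_of_lt huv), h1]
            exact le_of_lt h2
          · have hvu : v i < u i := by rw [h2]; exact h1
            simp [tOf, hs, hcube, min_eq_right (le_of_lt hvu), h2]
            exact le_of_lt h1
    have he : e' = eOf m' u v := by
      funext s
      rcases hs : eslT m' s with _ | i
      · rw [hcan.2 s hs]; simp [eOf, hs]
      · obtain ⟨hcube, hi0⟩ := F5 m' s i hs
        obtain ⟨s2, hs2⟩ := F3 m' i (by rw [hcube]; simp)
        have h1 := hu' s2 i hs2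
        have h2 := hv' s2 i hs2
        rw [hcube] at h1 h2
        have hee : εAt m' e' i = e' s := eps_eq m' e' hs
        simp only [eOf, hs]
        rcases hε : e' s with _ | _ <;> rw [hε] at hee <;> rw [hee] at h1 h2 <;>
          simp only [Bool.xor_false, Bool.xor_true, Bool.not_false, Bool.not_true,
            if_pos, if_neg (by simp : ¬ (false = true))] at h1 h2
        · have huv : u i < v i := by rw [h1]; exact h2
          symm; simp only [decide_eq_false_iff_not, not_lt]
          exact le_of_lt huv
        · have hvu : v i < u i := by rw [h2]; exact h1
          symm; exact decide_eq_true hvu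
    rw [ht, he]

lemma isPartition : (∀ idx : T n, Disjoint ((Bfam n idx).1) ((Bfam n idx).2)) ∧
    (∀ idx : T n, ∀ u v, crossAdj ((Bfam n idx).1) ((Bfam n idx).2) u v → (G n).Adj u v) ∧
    (∀ u v, (G n).Adj u v → ∃! idx : T n, crossAdj ((Bfam n idx).1) ((Bfam n idx).2) u v) := by
  classical
  refine ⟨?_, ?_, ?_⟩
  · rintro ⟨m, t, e⟩
    by_cases hcan : canonical m t e
    · simp only [Bfam, if_pos hcan]
      exact sides_disjoint
    · simp only [Bfam, if_neg hcan]
      exact disjoint_bot_left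
  · rintro ⟨m, t, e⟩ u v hcross
    by_cases hcan : canonical m t e
    swap
    · simp only [Bfam, if_neg hcan] at hcross
      rcases hcross with ⟨h, -⟩ | ⟨h, -⟩ <;> exact absurd h (Set.notMem_empty _)
    simp only [Bfam, if_pos hcan] at hcross
    rcases hcross with ⟨hu, hv⟩ | ⟨huW, hvU⟩
    · have hu' : inSide m t e false u := hu
      have hv' : inSide m t e true v := hv
      obtain ⟨hm, hne⟩ := cross_matches hu' hv'
      exact ⟨hne, m, hm⟩
    · have hv' : inSide m t e false v := hvU
      have hu' : inSide m t e true u := huW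
      obtain ⟨hm, hne⟩ := cross_matches hv' hu'
      exact ((G n).adj_symm ⟨hne, m, hm⟩)
  · intro u v hadj
    obtain ⟨hne, m, hm⟩ := hadj
    have hio : pat u v (i0T m) = true := hm (i0T m) true (F1 m)
    rw [pat_true_iff] at hio
    rcases lt_or_gt_of_ne hio with hor | hor
    · exact exists_unique_oriented m hm hne hor
    · have hm' : matchesC (pat v u) m := by rw [pat_comm]; exact hm
      obtain ⟨idx, hidx, huniq⟩ := exists_unique_oriented m hm' hne.symm hor
      refine ⟨idx, ?_, ?_⟩
      · rcases hidx with h | h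
        · exact Or.inr ⟨h.2, h.1⟩
        · exact Or.inl ⟨h.2, h.1⟩
      · intro idx' h'
        apply huniq idx'
        rcases h' with h | h
        · exact Or.inr ⟨h.2, h.1⟩
        · exact Or.inl ⟨h.2, h.1⟩

end Main


/-! ### transporting a family over a finite index type to `Fin k` -/

lemma mem_bpSet_of_family {Vt : Type} (G : SimpleGraph Vt) (S : Type) [Fintype S]
    (B : S → Set Vt × Set Vt)
    (h1 : ∀ i, Disjoint (B i).1 (B i).2)
    (h2 : ∀ i, ∀ u v, crossAdj (B i).1 (B i).2 u v → G.Adj u v)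
    (h3 : ∀ u v, G.Adj u v → ∃! i, crossAdj (B i).1 (B i).2 u v) :
    ∃ B' : Fin (Fintype.card S) → Set Vt × Set Vt, IsBicliquePartition G B' := by
  classical
  set e := Fintype.equivFin S with he
  refine ⟨fun k => B (e.symm k), ?_, ?_, ?_⟩
  · intro i; exact h1 _
  · intro i u v h; exact h2 _ u v h
  · intro u v hadj
    obtain ⟨i, hi, hu⟩ := h3 u v hadj
    refine ⟨e i, by simpa using hi, ?_⟩
    intro k hk
    have := hu (e.symm k) hk
    rw [← this]; simp

lemma bp_le (n : ℕ) : bp (G n) ≤ 352 * (n+1)^5 := by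
  obtain ⟨h1, h2, h3⟩ := isPartition (n := n)
  have hmem := mem_bpSet_of_family (G n) (T n) (Bfam n) h1 h2 h3
  have hcard : Fintype.card (T n) = 352 * (n+1)^5 := by
    simp [Fintype.card_fun]
    ring
  calc bp (G n) ≤ Fintype.card (T n) := Nat.sInf_le hmem
    _ = _ := hcard

lemma bp_set_nonempty (n : ℕ) :
    {k | ∃ B : Fin k → Set (V n) × Set (V n), IsBicliquePartition (G n) B}.Nonempty := by
  obtain ⟨h1, h2, h3⟩ := isPartition (n := n)
  exact ⟨_, mem_bpSet_of_family (G n) (T n) (Bfam n) h1 h2 h3⟩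

/-! ### coloring from a biclique partition -/

lemma colorable_of_partition {Vt : Type} (G : SimpleGraph Vt) {k : ℕ}
    (B : Fin k → Set Vt × Set Vt) (hB : IsBicliquePartition G B) :
    G.Colorable (3 ^ k) := by
  classical
  obtain ⟨hdis, _, hex⟩ := hB
  have C : G.Coloring (Fin k → Fin 3) := SimpleGraph.Coloring.mk
    (fun v i => if v ∈ (B i).1 then 0 else if v ∈ (B i).2 then 1 else 2) ?_
  · have := C.colorable
    simpa [Fintype.card_fun] using this
  · intro u v hadj hEq
    obtain ⟨i, hi, -⟩ := hex u v hadj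
    have hfi := congrFun hEq i
    try dsimp only at hfi
    rcases hi with ⟨hu, hv⟩ | ⟨hu, hv⟩
    · have hvn : v ∉ (B i).1 := fun hmem => Set.disjoint_left.mp (hdis i) hmem hv
      rw [if_pos hu, if_neg hvn, if_pos hv] at hfi
      exact absurd hfi (by decide)
    · have hun : u ∉ (B i).1 := fun hmem => Set.disjoint_left.mp (hdis i) hmem hu
      rw [if_neg hun, if_pos hu, if_pos hv] at hfi
      exact absurd hfi (by decide)

/-! ### independence number bound -/

section Indep
variable {n : ℕ}

def fA (x : V n) : Fin 4 → Fin (n+1) := fun i => x (Fin.castLE (by norm_num) i)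

lemma fA_eq_iff {x y : V n} : fA x = fA y ↔ ∀ i : Fin 7, i.val < 4 → x i = y i := by
  constructor
  · intro h i hi
    have h2 := congrFun h ⟨i.val, hi⟩
    have h3 : (Fin.castLE (by norm_num : 4 ≤ 7) (⟨i.val, hi⟩ : Fin 4)) = i := by
      apply Fin.ext; rfl
    simpa [fA, h3] using h2
  · intro h
    funext j
    exact h _ (by simpa using j.isLt)

lemma dichotomy {x y : V n} (hxy : x ≠ y) (hna : ¬ (G n).Adj x y) :
    ((∀ i : Fin 7, i.val < 4 → x i ≠ y i) ∧ (∃ i : Fin 7, 4 ≤ i.val ∧ x i = y i)) ∨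
    ((∀ i : Fin 7, i.val < 4 → x i = y i) ∧ (∀ i : Fin 7, 4 ≤ i.val → x i ≠ y i)) := by
  have hnc : ¬ covered (pat x y) := fun hc => hna ⟨hxy, hc⟩
  have hρ : pat x y ≠ (fun _ => false) := by
    obtain ⟨i, hi⟩ := Function.ne_iff.mp hxy
    intro hEq
    exact hi (pat_false_iff.mp (congrFun hEq i))
  rcases F10 _ hρ hnc with ⟨h1, i, hi, h2⟩ | ⟨h1, h2⟩
  · exact Or.inl ⟨fun i hi4 => pat_true_iff.mp (h1 i hi4), ⟨i, hi, pat_false_iff.mp h2⟩⟩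
  · exact Or.inr ⟨fun i hi4 => pat_false_iff.mp (h1 i hi4),
      fun i hi4 => pat_true_iff.mp (h2 i hi4)⟩

lemma indep_bound (I : Finset (V n))
    (hI : ∀ x ∈ I, ∀ y ∈ I, x ≠ y → ¬ (G n).Adj x y) :
    I.card ≤ 3 * (n + 1) := by
  classical
  by_cases hbig : ∃ p, 4 ≤ (I.filter (fun x => fA x = p)).card
  · obtain ⟨p, hp⟩ := hbig
    set c := I.filter (fun x => fA x = p) with hcdef
    have hIc : ∀ x ∈ I, fA x = p := by
      intro x hx
      by_contra hxp
      have hmap : ∀ z ∈ c, ∃ j : Fin 7, 4 ≤ j.val ∧ x j = z j := by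
        intro z hz
        have hzI : z ∈ I := (Finset.mem_filter.mp hz).1
        have hzp : fA z = p := (Finset.mem_filter.mp hz).2
        have hxz : x ≠ z := by rintro rfl; exact hxp hzp
        rcases dichotomy hxz (hI x hx z hzI hxz) with ⟨h1, h2⟩ | ⟨h1, h2⟩
        · exact h2
        · exact absurd (by rw [fA_eq_iff.mpr h1, hzp]) hxp
      set g : V n → Fin 7 := fun z =>
        if h : ∃ j : Fin 7, 4 ≤ j.val ∧ x j = z j then h.choose else ⟨4, by norm_num⟩
        with hgdef
      have hspec : ∀ z ∈ c, 4 ≤ (g z).val ∧ x (g z) = z (g z) := by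
        intro z hz
        have h := hmap z hz
        simp only [hgdef, dif_pos h]
        exact h.choose_spec
      have hmapsto : ∀ z ∈ c, g z ∈ (Finset.univ : Finset (Fin 7)) := by
        intro z _; exact Finset.mem_univ _
      -- refine target: use the set of b-coordinates
      have hmapsto' : ∀ z ∈ c, g z ∈ (Finset.univ.filter (fun j : Fin 7 => 4 ≤ j.val)) := by
        intro z hz
        simp only [Finset.mem_filter, Finset.mem_univ, true_and]
        exact (hspec z hz).1
      have hcard3 : (Finset.univ.filter (fun j : Fin 7 => 4 ≤ j.val)).card = 3 := by decide
      have hlt : (Finset.univ.filter (fun j : Fin 7 => 4 ≤ j.val)).card < c.card := by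
        rw [hcard3]; omega
      obtain ⟨z, hz, z', hz', hzz', hgzz⟩ :=
        Finset.exists_ne_map_eq_of_card_lt_of_maps_to hlt hmapsto'
      have hz1 := hspec z hz
      have hz2 := hspec z' hz'
      have heqz : z (g z) = z' (g z) := by
        rw [← hz1.2, hgzz, hz2.2]
      have hzI : z ∈ I := (Finset.mem_filter.mp hz).1
      have hz'I : z' ∈ I := (Finset.mem_filter.mp hz').1
      have hfz : fA z = fA z' := by
        rw [(Finset.mem_filter.mp hz).2, (Finset.mem_filter.mp hz').2]
      rcases dichotomy hzz' (hI z hzI z' hz'I hzz') with ⟨h1, -⟩ | ⟨-, h2⟩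
      · exact h1 ⟨0, by norm_num⟩ (by norm_num) (fA_eq_iff.mp hfz ⟨0, by norm_num⟩ (by norm_num))
      · exact h2 (g z) hz1.1 heqz
    -- now I injects into Fin (n+1) via coordinate 4
    have hinj : Set.InjOn (fun x : V n => x ⟨4, by norm_num⟩) I := by
      intro x hx y hy hxy4
      have hxI : x ∈ I := hx
      have hyI : y ∈ I := hy
      by_contra hxy
      rcases dichotomy hxy (hI x hxI y hyI hxy) with ⟨h1, -⟩ | ⟨-, h2⟩
      · have hfxy : fA x = fA y := by rw [hIc x hxI, hIc y hyI]
        exact h1 ⟨0, by norm_num⟩ (by norm_num) (fA_eq_iff.mp hfxy ⟨0, by norm_num⟩ (by norm_num))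
      · exact h2 ⟨4, by norm_num⟩ (by norm_num) hxy4
    have := Finset.card_le_card_of_injOn (fun x : V n => x ⟨4, by norm_num⟩)
      (fun x _ => Finset.mem_univ _) hinj
    simp only [Finset.card_univ, Fintype.card_fin] at this
    omega
  · push_neg at hbig
    have h1 : I.card ≤ 3 * (I.image fA).card :=
      Finset.card_le_mul_card_image I 3 (fun p _ => by have := hbig p; omega)
    have hinj : Set.InjOn (fun p : Fin 4 → Fin (n+1) => p 0) (I.image fA) := by
      intro p hp q hq hpq
      obtain ⟨x, hx, rfl⟩ := Finset.mem_image.mp hp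
      obtain ⟨y, hy, rfl⟩ := Finset.mem_image.mp hq
      dsimp only at hpq
      by_cases hxy : x = y
      · rw [hxy]
      rcases dichotomy hxy (hI x hx y hy hxy) with ⟨hA, -⟩ | ⟨hB, -⟩
      · exact absurd hpq (hA (Fin.castLE (by norm_num) 0) (by norm_num))
      · exact fA_eq_iff.mpr hB
    have h2 := Finset.card_le_card_of_injOn (fun p : Fin 4 → Fin (n+1) => p 0)
      (fun p _ => Finset.mem_univ _) hinj
    simp only [Finset.card_univ, Fintype.card_fin] at h2
    calc I.card ≤ 3 * (I.image fA).card := h1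
      _ ≤ 3 * (n+1) := by omega

lemma card_le_of_colorable {m : ℕ} (hc : (G n).Colorable m) :
    (n+1)^7 ≤ m * (3 * (n+1)) := by
  classical
  obtain ⟨C⟩ := hc
  have hfib : ∀ a ∈ Finset.univ.image (fun x => C x),
      ((Finset.univ : Finset (V n)).filter (fun x => C x = a)).card ≤ 3*(n+1) := by
    intro a _
    apply indep_bound
    intro x hx y hy hxy hadj
    have hvalid := C.valid hadj
    have hx' := (Finset.mem_filter.mp hx).2
    have hy' := (Finset.mem_filter.mp hy).2
    exact hvalid (hx'.trans hy'.symm)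
  have h1 := Finset.card_le_mul_card_image (Finset.univ : Finset (V n)) (3*(n+1)) hfib
  have hV : (Finset.univ : Finset (V n)).card = (n+1)^7 := by
    simp [Finset.card_univ, Fintype.card_fun]
  have h2 : (Finset.univ.image (fun x => C x)).card ≤ m := by
    calc (Finset.univ.image (fun x => C x)).card ≤ (Finset.univ : Finset (Fin m)).card :=
          Finset.card_le_card (Finset.subset_univ _)
      _ = m := by simp
  calc (n+1)^7 = (Finset.univ : Finset (V n)).card := hV.symm
    _ ≤ 3*(n+1) * (Finset.univ.image (fun x => C x)).card := h1
    _ ≤ 3*(n+1) * m := by exact Nat.mul_le_mul_left _ h2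
    _ = m * (3*(n+1)) := by ring

end Indep

/-! ### main theorem assembly -/

theorem main :
    ∃ c : ℝ, 0 < c ∧ ∀ N : ℕ,
      ∃ (Vt : Type) (_ : Fintype Vt) (G : SimpleGraph Vt),
        N ≤ bp G ∧
        ∀ m : ℕ, G.Colorable m → c * (bp G : ℝ) ^ ((6 : ℝ) / 5) ≤ (m : ℝ) := by
  refine ⟨1 / (3 * 352^2), by norm_num, ?_⟩
  intro N
  set nn : ℕ := 3^N - 1 with hnn
  have h3N : 1 ≤ 3^N := Nat.one_le_pow _ _ (by norm_num)
  have hnn1 : nn + 1 = 3^N := by omega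
  refine ⟨V nn, inferInstance, G nn, ?_, ?_⟩
  · -- lower bound on bp
    obtain ⟨B, hB⟩ := Nat.sInf_mem (bp_set_nonempty nn)
    have hcol := colorable_of_partition (G nn) B hB
    have hcard := card_le_of_colorable hcol
    have hkey : (nn+1)^6 ≤ 3^(bp (G nn) + 1) := by
      have hcard' : (nn+1)^6 * (nn+1) ≤ 3^(bp (G nn)) * (3 * (nn+1)) := by
        have h7 : (nn+1)^7 = (nn+1)^6 * (nn+1) := by ring
        rw [← h7]
        exact hcard
      have hr : 3^(bp (G nn)) * (3 * (nn+1)) = 3^(bp (G nn) + 1) * (nn+1) := by ring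
      rw [hr] at hcard'
      exact Nat.le_of_mul_le_mul_right hcard' (by omega)
    rw [hnn1, ← pow_mul] at hkey
    have h6N : N * 6 ≤ bp (G nn) + 1 :=
      (Nat.pow_le_pow_iff_right (by norm_num : 1 < 3)).mp hkey
    omega
  · intro m hm
    have hcard := card_le_of_colorable hm
    have h6 : (nn+1)^6 ≤ 3 * m := by
      have h7 : (nn+1)^7 = (nn+1)^6 * (nn+1) := by ring
      have hr : m * (3 * (nn+1)) = (3 * m) * (nn+1) := by ring
      rw [h7, hr] at hcard
      exact Nat.le_of_mul_le_mul_right hcard (by omega)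
    have h6R : ((nn:ℝ)+1)^6 ≤ 3 * m := by exact_mod_cast h6
    have hbpR : ((bp (G nn) : ℝ)) ≤ 352 * ((nn:ℝ)+1)^5 := by
      exact_mod_cast bp_le nn
    have hrpow : ((bp (G nn) : ℝ)) ^ ((6:ℝ)/5) ≤ (352:ℝ)^2 * ((nn:ℝ)+1)^6 := by
      have hx : (0:ℝ) ≤ (bp (G nn) : ℝ) := Nat.cast_nonneg _
      have hy : (0:ℝ) ≤ 352 * ((nn:ℝ)+1)^5 := by positivity
      calc ((bp (G nn) : ℝ)) ^ ((6:ℝ)/5)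
          ≤ (352 * ((nn:ℝ)+1)^5) ^ ((6:ℝ)/5) :=
            Real.rpow_le_rpow hx hbpR (by norm_num)
        _ = (352:ℝ) ^ ((6:ℝ)/5) * (((nn:ℝ)+1)^5) ^ ((6:ℝ)/5) :=
            Real.mul_rpow (by norm_num) (by positivity)
        _ ≤ (352:ℝ)^2 * ((nn:ℝ)+1)^6 := by
            have e1 : (((nn:ℝ)+1)^5) ^ ((6:ℝ)/5) = ((nn:ℝ)+1)^6 := by
              rw [← Real.rpow_natCast ((nn:ℝ)+1) 5, ← Real.rpow_mul (by positivity)]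
              norm_num
            have e2 : (352:ℝ) ^ ((6:ℝ)/5) ≤ (352:ℝ)^2 := by
              calc (352:ℝ) ^ ((6:ℝ)/5) ≤ (352:ℝ) ^ ((2:ℕ):ℝ) :=
                    Real.rpow_le_rpow_of_exponent_le (by norm_num) (by norm_num)
                _ = (352:ℝ)^2 := Real.rpow_natCast _ 2
            rw [e1]
            exact mul_le_mul_of_nonneg_right e2 (by positivity)
    calc (1 / (3 * 352^2) : ℝ) * ((bp (G nn) : ℝ)) ^ ((6:ℝ)/5)
        ≤ (1 / (3 * 352^2) : ℝ) * ((352:ℝ)^2 * ((nn:ℝ)+1)^6) := by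
          apply mul_le_mul_of_nonneg_left hrpow (by norm_num)
      _ = ((nn:ℝ)+1)^6 / 3 := by ring
      _ ≤ m := by linarith


end ASS

/-- There exist a constant `c > 0` and an infinite family of graphs `G` (with `bp(G)`
arbitrarily large) such that `χ(G) ≥ c · bp(G)^{6/5}`, disproving the
Alon–Saks–Seymour conjecture. -/
theorem alon_saks_seymour_counterexample :
    ∃ c : ℝ, 0 < c ∧ ∀ N : ℕ,
      ∃ (V : Type) (_ : Fintype V) (G : SimpleGraph V),
        N ≤ bp G ∧
        ∀ m : ℕ, G.Colorable m → c * (bp G : ℝ) ^ ((6 : ℝ) / 5) ≤ (m : ℝ) := by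
  exact ASS.main
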